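/- Let f : ℝ_{>0}^n → ℝ_{>0} be defined by f(x) = (Σ_{j=1}^m c_j²·x^{2β_j})^{1/2} with β₁,…,β_m ∈ ℤ^n and nonzero reals c₁,…,c_m, let α₁,…,αₙ ∈ ℤ^n and σ₁,…,σₙ > 0, and let ξ_{i,j} (1 ≤ i ≤ n, 0 ≤ j ≤ n) be i.i.d. standard Gaussian random variables. Then the expected number of nondegenerate solutions in ℝ_{>0}^n of the random system ξ_{i,0}·f(x) + Σ_{j=1}^n ξ_{i,j}·σ_j·x^{α_j} = 0 (i = 1,…,n) is at most 2·2^{-n} = 2^{1-n}. -/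

import Mathlib

open MeasureTheory ProbabilityTheory Matrix
open scoped ENNReal BigOperators

/-- The monomial `x^α = x₁^{α₁} ⋯ xₙ^{αₙ}` for an integer exponent vector `α`. -/
noncomputable def zmon {n : ℕ} (α : Fin n → ℤ) (x : Fin n → ℝ) : ℝ :=
  ∏ i, x i ^ α i

/-- The components `F_i(x) = ξ_{i,0} f(x) + ∑_j ξ_{i,j} σ_j x^{α_j}` of the random system,
where `f(x) = (∑_j c_j² x^{2β_j})^{1/2}`. -/
noncomputable def Fsys {n m : ℕ} (β : Fin m → Fin n → ℤ) (c : Fin m → ℝ)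
    (α : Fin n → Fin n → ℤ) (σ : Fin n → ℝ) (ξ : Fin n → Fin (n + 1) → ℝ)
    (i : Fin n) (x : Fin n → ℝ) : ℝ :=
  ξ i 0 * Real.sqrt (∑ j, c j ^ 2 * zmon (fun k => 2 * β j k) x)
    + ∑ j : Fin n, ξ i j.succ * σ j * zmon (α j) x

open scoped NNReal

noncomputable section

namespace ESLaux

local notation "γ" => gaussianReal 0 1

instance : NullSingletonClass (gaussianReal 0 1 : Measure ℝ) :=
  ⟨fun a => gaussianReal_absolutelyContinuous 0 one_ne_zero (measure_singleton a)⟩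

lemma measurable_mveval {ι : Type*} [Fintype ι] (p : MvPolynomial ι ℝ) :
    Measurable fun x : ι → ℝ => MvPolynomial.eval x p := by
  classical
  have : (fun x : ι → ℝ => MvPolynomial.eval x p)
      = fun x => ∑ d ∈ p.support, MvPolynomial.coeff d p * ∏ i ∈ d.support, x i ^ d i := by
    funext x; rw [MvPolynomial.eval_eq]
  rw [this]
  exact Finset.measurable_sum _ fun d _ => measurable_const.mul
    (Finset.measurable_prod _ fun i _ => (measurable_pi_apply i).pow_const _)

lemma measurePreserving_piMap {ι : Type*} [Fintype ι] {X : ι → Type*} [∀ i, MeasurableSpace (X i)]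
    (μ : ∀ i, Measure (X i)) [∀ i, SigmaFinite (μ i)] (f : ∀ i, X i → X i)
    (hf : ∀ i, MeasurePreserving (f i) (μ i) (μ i)) :
    MeasurePreserving (fun x i => f i (x i)) (Measure.pi μ) (Measure.pi μ) := by
  have hmeas : Measurable fun (x : ∀ i, X i) i => f i (x i) :=
    measurable_pi_lambda _ fun i => (hf i).measurable.comp (measurable_pi_apply i)
  refine ⟨hmeas, (Measure.pi_eq fun s hs => ?_).symm⟩
  rw [Measure.map_apply hmeas (MeasurableSet.univ_pi hs)]
  have hpre : (fun (x : ∀ i, X i) i => f i (x i)) ⁻¹' (Set.univ.pi s)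
      = Set.univ.pi fun i => f i ⁻¹' s i := by
    ext x; simp [Set.mem_pi]
  rw [hpre, Measure.pi_pi]
  exact Finset.prod_congr rfl fun i _ => (hf i).measure_preimage (hs i).nullMeasurableSet

lemma measurePreserving_matrixToFun (n m : ℕ) :
    MeasurePreserving (fun (ξ : Fin n → Fin m → ℝ) (p : Fin n × Fin m) => ξ p.1 p.2)
      (Measure.pi fun _ : Fin n => Measure.pi fun _ : Fin m => γ)
      (Measure.pi fun _ : Fin n × Fin m => γ) := by
  have hmeas : Measurable fun (ξ : Fin n → Fin m → ℝ) (p : Fin n × Fin m) => ξ p.1 p.2 :=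
    measurable_pi_lambda _ fun p => (measurable_pi_apply p.2).comp (measurable_pi_apply p.1)
  refine ⟨hmeas, (Measure.pi_eq fun t ht => ?_).symm⟩
  rw [Measure.map_apply hmeas (MeasurableSet.univ_pi ht)]
  have hpre : (fun (ξ : Fin n → Fin m → ℝ) (p : Fin n × Fin m) => ξ p.1 p.2) ⁻¹' (Set.univ.pi t)
      = Set.univ.pi fun i => Set.univ.pi fun j => t (i, j) := by
    ext ξ
    simp only [Set.mem_preimage, Set.mem_pi, Set.mem_univ, forall_true_left, Prod.forall]
  rw [hpre, Measure.pi_pi]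
  rw [Fintype.prod_prod_type]
  exact Finset.prod_congr rfl fun i _ => (Measure.pi_pi _ _)

lemma mvpoly_null_fin : ∀ (k : ℕ) (p : MvPolynomial (Fin k) ℝ), p ≠ 0 →
    Measure.pi (fun _ : Fin k => γ) {x | MvPolynomial.eval x p = 0} = 0 := by
  intro k
  induction k with
  | zero =>
    intro p hp
    obtain ⟨a, rfl⟩ := MvPolynomial.C_surjective (Fin 0) p
    have ha : a ≠ 0 := fun h => hp (by simp [h])
    have hempty : {x : Fin 0 → ℝ | MvPolynomial.eval x (MvPolynomial.C a) = 0} = ∅ := by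
      ext x; simp [ha]
    rw [hempty]
    exact measure_empty
  | succ k ih =>
    intro p hp
    set q := MvPolynomial.finSuccEquiv ℝ k p with hqdef
    have hq0 : q ≠ 0 := by
      intro h
      apply hp
      have h2 : (MvPolynomial.finSuccEquiv ℝ k) p = 0 := hqdef ▸ h
      exact (MvPolynomial.finSuccEquiv ℝ k).injective (by rw [h2, map_zero])
    have hlead : q.coeff q.natDegree ≠ 0 :=
      mt Polynomial.leadingCoeff_eq_zero.mp hq0
    -- the target set in the product space
    set T : Set (ℝ × (Fin k → ℝ)) :=
      {aw | Polynomial.eval aw.1 (q.map (MvPolynomial.eval aw.2)) = 0} with hTdef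
    have hevalform : ∀ aw : ℝ × (Fin k → ℝ),
        Polynomial.eval aw.1 (q.map (MvPolynomial.eval aw.2))
          = ∑ i ∈ Finset.range (q.natDegree + 1),
              MvPolynomial.eval aw.2 (q.coeff i) * aw.1 ^ i := by
      intro aw
      rw [Polynomial.eval_map, Polynomial.eval₂_eq_sum_range]
    have hTmeas : MeasurableSet T := by
      have : T = (fun aw : ℝ × (Fin k → ℝ) => ∑ i ∈ Finset.range (q.natDegree + 1),
          MvPolynomial.eval aw.2 (q.coeff i) * aw.1 ^ i) ⁻¹' {0} := by
        ext aw; simp [hTdef, hevalform aw]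
      rw [this]
      refine Finset.measurable_sum _ (fun i _ => Measurable.mul ?_ ?_) (measurableSet_singleton 0)
      · exact (measurable_mveval (q.coeff i)).comp measurable_snd
      · exact measurable_fst.pow_const i
    have hS : {x : Fin (k+1) → ℝ | MvPolynomial.eval x p = 0}
        = (MeasurableEquiv.piFinSuccAbove (fun _ : Fin (k+1) => ℝ) 0) ⁻¹' T := by
      ext x
      have hx : (Fin.cons (x 0) (fun j => x j.succ) : Fin (k+1) → ℝ) = x :=
        Fin.cons_self_tail x
      have he : (MeasurableEquiv.piFinSuccAbove (fun _ : Fin (k+1) => ℝ) 0) x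
          = (x 0, fun j => x j.succ) := rfl
      simp only [Set.mem_setOf_eq, Set.mem_preimage, he, hTdef]
      rw [← MvPolynomial.eval_eq_eval_mv_eval', hx]
    rw [hS, (measurePreserving_piFinSuccAbove (fun _ : Fin (k+1) => γ) 0).measure_preimage
      hTmeas.nullMeasurableSet]
    -- now swap and use Fubini
    have hswap : ((γ : Measure ℝ).prod (Measure.pi fun _ : Fin k => γ)) T
        = ((Measure.pi fun _ : Fin k => γ).prod γ) (Prod.swap ⁻¹' T) := by
      rw [← Measure.prod_swap, Measure.map_apply measurable_swap hTmeas]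
    rw [hswap]
    rw [Measure.measure_prod_null (measurable_swap hTmeas)]
    have hBad : (Measure.pi fun _ : Fin k => γ) {w | MvPolynomial.eval w (q.coeff q.natDegree) = 0}
        = 0 := ih _ hlead
    filter_upwards [compl_mem_ae_iff.mpr hBad] with w hw
    have hr : q.map (MvPolynomial.eval w) ≠ 0 := by
      intro h0
      apply hw
      have : (q.map (MvPolynomial.eval w)).coeff q.natDegree = 0 := by rw [h0]; simp
      rw [Polynomial.coeff_map] at this
      exact this
    have hfin : {a : ℝ | Polynomial.eval a (q.map (MvPolynomial.eval w)) = 0}.Finite :=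
      Polynomial.finite_setOf_isRoot hr
    have : (Prod.mk w ⁻¹' (Prod.swap ⁻¹' T))
        = {a : ℝ | Polynomial.eval a (q.map (MvPolynomial.eval w)) = 0} := by
      ext a; simp [hTdef]
    rw [this]
    exact hfin.measure_zero γ

lemma mvpoly_null {ι : Type*} [Fintype ι] (p : MvPolynomial ι ℝ) (hp : p ≠ 0) :
    Measure.pi (fun _ : ι => γ) {x | MvPolynomial.eval x p = 0} = 0 := by
  classical
  set f := Fintype.equivFin ι
  -- transfer along precomposition
  have hmeas : Measurable fun (x : Fin (Fintype.card ι) → ℝ) (i : ι) => x (f i) :=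
    measurable_pi_lambda _ fun i => measurable_pi_apply _
  have mp : MeasurePreserving (fun (x : Fin (Fintype.card ι) → ℝ) (i : ι) => x (f i))
      (Measure.pi fun _ : Fin (Fintype.card ι) => γ) (Measure.pi fun _ : ι => γ) := by
    refine ⟨hmeas, (Measure.pi_eq fun s hs => ?_).symm⟩
    rw [Measure.map_apply hmeas (MeasurableSet.univ_pi hs)]
    have hpre : (fun (x : Fin (Fintype.card ι) → ℝ) (i : ι) => x (f i)) ⁻¹' (Set.univ.pi s)
        = Set.univ.pi fun k => s (f.symm k) := by
      ext x
      simp only [Set.mem_preimage, Set.mem_pi, Set.mem_univ, forall_true_left]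
      constructor
      · intro h k; simpa using h (f.symm k)
      · intro h i; simpa using h (f i)
    rw [hpre, Measure.pi_pi]
    exact Equiv.prod_comp f.symm fun i => γ (s i)
  have hSmeas : MeasurableSet {x : ι → ℝ | MvPolynomial.eval x p = 0} :=
    (measurable_mveval p) (measurableSet_singleton 0)
  rw [← mp.measure_preimage hSmeas.nullMeasurableSet]
  have hpre : (fun (x : Fin (Fintype.card ι) → ℝ) (i : ι) => x (f i)) ⁻¹'
      {x : ι → ℝ | MvPolynomial.eval x p = 0}
      = {x | MvPolynomial.eval x (MvPolynomial.rename f p) = 0} := by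
    ext x
    simp only [Set.mem_preimage, Set.mem_setOf_eq, MvPolynomial.eval_rename]
    rfl
  rw [hpre]
  exact mvpoly_null_fin _ _ fun h => hp (MvPolynomial.rename_injective f f.injective (by simpa using h))
variable {n : ℕ}

def colA (ξ : Fin n → Fin (n + 1) → ℝ) : Matrix (Fin n) (Fin n) ℝ :=
  Matrix.of fun i j => ξ i j.succ

noncomputable def yv (ξ : Fin n → Fin (n + 1) → ℝ) : Fin n → ℝ :=
  ((colA ξ).det)⁻¹ • ((colA ξ).cramer fun i => -ξ i 0)

noncomputable def NU (n : ℕ) : Measure (Fin n → Fin (n + 1) → ℝ) :=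
  Measure.pi fun _ : Fin n => Measure.pi fun _ : Fin (n + 1) => γ

instance : IsProbabilityMeasure (NU n) := by unfold NU; infer_instance

lemma measurable_entry (i : Fin n) (j : Fin (n + 1)) :
    Measurable fun ξ : Fin n → Fin (n + 1) → ℝ => ξ i j :=
  (measurable_pi_apply j).comp (measurable_pi_apply i)

lemma measurable_detOf {X : Type*} [MeasurableSpace X] {k : ℕ}
    (M : X → Matrix (Fin k) (Fin k) ℝ) (hM : ∀ i j, Measurable fun x => M x i j) :
    Measurable fun x => (M x).det := by
  have : (fun x => (M x).det) = fun x =>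
      ∑ σ : Equiv.Perm (Fin k), ((Equiv.Perm.sign σ : ℤ) : ℝ) * ∏ i, M x (σ i) i := by
    funext x; rw [Matrix.det_apply']
  rw [this]
  exact Finset.measurable_sum _ fun σ _ =>
    measurable_const.mul (Finset.measurable_prod _ fun i _ => hM (σ i) i)

lemma measurable_detA : Measurable fun ξ : Fin n → Fin (n + 1) → ℝ => (colA ξ).det :=
  measurable_detOf _ fun i j => measurable_entry i j.succ

lemma measurable_yv (j : Fin n) : Measurable fun ξ : Fin n → Fin (n + 1) → ℝ => yv ξ j := by
  have h1 : Measurable fun ξ : Fin n → Fin (n + 1) → ℝ =>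
      ((colA ξ).cramer fun i => -ξ i 0) j := by
    have : (fun ξ : Fin n → Fin (n + 1) → ℝ => ((colA ξ).cramer fun i => -ξ i 0) j)
        = fun ξ => ((colA ξ).updateCol j fun i => -ξ i 0).det := by
      funext ξ; rw [Matrix.cramer_apply]
    rw [this]
    refine measurable_detOf _ fun i j' => ?_
    by_cases h : j' = j <;>
      simp only [Matrix.updateCol_apply, h, if_true, if_false]
    · exact (measurable_entry i 0).neg
    · exact measurable_entry i j'.succ
  exact (measurable_detA.inv).mul h1

lemma det_colA_null (n : ℕ) : NU n {ξ | (colA ξ).det = 0} = 0 := by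
  classical
  set P : MvPolynomial (Fin n × Fin (n + 1)) ℝ :=
    (Matrix.of fun i j : Fin n =>
      (MvPolynomial.X (i, j.succ) : MvPolynomial (Fin n × Fin (n + 1)) ℝ)).det with hPdef
  have hPval : ∀ x : Fin n × Fin (n + 1) → ℝ,
      MvPolynomial.eval x P = (Matrix.of fun i j : Fin n => x (i, j.succ)).det := by
    intro x
    rw [hPdef, RingHom.map_det]
    congr 1
    ext i j
    simp
  have hP0 : P ≠ 0 := by
    intro h
    have h1 := hPval fun q => if q.2 = q.1.succ then (1 : ℝ) else 0
    rw [h] at h1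
    have h2 : (Matrix.of fun i j : Fin n =>
        if (j.succ : Fin (n + 1)) = i.succ then (1 : ℝ) else 0) = (1 : Matrix _ _ ℝ) := by
      ext i j
      simp only [Matrix.of_apply, Matrix.one_apply, Fin.succ_inj]
      by_cases hij : i = j
      · simp [hij]
      · rw [if_neg (Ne.symm hij), if_neg hij]
    rw [map_zero] at h1
    rw [h2, Matrix.det_one] at h1
    exact zero_ne_one h1
  have hSmeas : MeasurableSet {x : Fin n × Fin (n + 1) → ℝ | MvPolynomial.eval x P = 0} :=
    measurable_mveval P (measurableSet_singleton 0)
  have hpre : {ξ : Fin n → Fin (n + 1) → ℝ | (colA ξ).det = 0}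
      = (fun (ξ : Fin n → Fin (n + 1) → ℝ) (p : Fin n × Fin (n + 1)) => ξ p.1 p.2) ⁻¹'
        {x | MvPolynomial.eval x P = 0} := by
    ext ξ
    simp only [Set.mem_setOf_eq, Set.mem_preimage, hPval]
    rfl
  rw [show NU n = Measure.pi fun _ : Fin n => Measure.pi fun _ : Fin (n + 1) => γ from rfl,
    hpre, (measurePreserving_matrixToFun n (n + 1)).measure_preimage hSmeas.nullMeasurableSet]
  exact mvpoly_null P hP0

/-! ### Sign flips -/

def eps (s : Fin n → Bool) : Fin n → ℝ := fun j => if s j then 1 else -1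

lemma eps_sq (s : Fin n → Bool) (j : Fin n) : eps s j * eps s j = 1 := by
  unfold eps; split <;> norm_num

lemma eps_ne_zero (s : Fin n → Bool) (j : Fin n) : eps s j ≠ 0 := by
  unfold eps; split <;> norm_num

def flipMap (s : Fin n → Bool) (ξ : Fin n → Fin (n + 1) → ℝ) : Fin n → Fin (n + 1) → ℝ :=
  fun i j => (Fin.cases 1 (eps s) j : ℝ) * ξ i j

lemma gauss_flip {c : ℝ} (hc : c = 1 ∨ c = -1) :
    MeasurePreserving (fun x : ℝ => c * x) γ γ := by
  have h2 : (⟨c ^ 2, sq_nonneg c⟩ : ℝ≥0) = 1 := by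
    ext
    rcases hc with rfl | rfl <;> norm_num
  refine ⟨measurable_id.const_mul c, ?_⟩
  rw [gaussianReal_map_const_mul c, mul_zero]
  congr 1
  rw [mul_one]
  exact h2

lemma flip_measurePreserving (s : Fin n → Bool) :
    MeasurePreserving (flipMap s) (NU n) (NU n) := by
  have hcase : ∀ j : Fin (n + 1), (Fin.cases 1 (eps s) j : ℝ) = 1 ∨
      (Fin.cases 1 (eps s) j : ℝ) = -1 := by
    intro j
    induction j using Fin.cases with
    | zero => left; rfl
    | succ j' =>
        rw [Fin.cases_succ]
        unfold eps
        by_cases h : s j' = true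
        · rw [if_pos h]; left; rfl
        · rw [if_neg h]; right; rfl
  have hrow : MeasurePreserving
      (fun (v : Fin (n + 1) → ℝ) j => (Fin.cases 1 (eps s) j : ℝ) * v j)
      (Measure.pi fun _ : Fin (n + 1) => γ) (Measure.pi fun _ : Fin (n + 1) => γ) :=
    measurePreserving_piMap _ _ fun j => gauss_flip (hcase j)
  exact measurePreserving_piMap (fun _ : Fin n => Measure.pi fun _ : Fin (n + 1) => γ)
    (fun _ v j => (Fin.cases 1 (eps s) j : ℝ) * v j) fun _ => hrow

lemma yv_solves (ξ : Fin n → Fin (n + 1) → ℝ) (h : (colA ξ).det ≠ 0) :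
    colA ξ *ᵥ yv ξ = fun i => -ξ i 0 := by
  unfold yv
  rw [Matrix.mulVec_smul, Matrix.mulVec_cramer, smul_smul, inv_mul_cancel₀ h, one_smul]

lemma mulVec_cancel {k : ℕ} {A : Matrix (Fin k) (Fin k) ℝ} (h : A.det ≠ 0)
    {u v : Fin k → ℝ} (huv : A *ᵥ u = A *ᵥ v) : u = v := by
  have hz : A *ᵥ (u - v) = 0 := by
    have := congrArg (fun t => t - A *ᵥ v) huv
    simpa [Matrix.mulVec_sub] using this
  have := Matrix.eq_zero_of_mulVec_eq_zero h hz
  exact sub_eq_zero.mp this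

lemma colA_flip (s : Fin n → Bool) (ξ : Fin n → Fin (n + 1) → ℝ) :
    colA (flipMap s ξ) = colA ξ * Matrix.diagonal (eps s) := by
  ext i j
  simp only [colA, flipMap, Matrix.of_apply, Matrix.mul_diagonal, Fin.cases_succ]
  ring

lemma det_colA_flip (s : Fin n → Bool) (ξ : Fin n → Fin (n + 1) → ℝ) :
    (colA (flipMap s ξ)).det = (colA ξ).det * ∏ j, eps s j := by
  rw [colA_flip, Matrix.det_mul, Matrix.det_diagonal]

lemma yv_flip (s : Fin n → Bool) (ξ : Fin n → Fin (n + 1) → ℝ) (h : (colA ξ).det ≠ 0) :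
    yv (flipMap s ξ) = fun j => eps s j * yv ξ j := by
  have hdet' : (colA (flipMap s ξ)).det ≠ 0 := by
    rw [det_colA_flip]
    exact mul_ne_zero h (Finset.prod_ne_zero_iff.mpr fun j _ => eps_ne_zero s j)
  apply mulVec_cancel hdet'
  rw [yv_solves _ hdet']
  rw [colA_flip, ← Matrix.mulVec_mulVec]
  have hdiag : Matrix.diagonal (eps s) *ᵥ (fun j => eps s j * yv ξ j) = yv ξ := by
    funext j
    rw [Matrix.mulVec_diagonal]
    rw [← mul_assoc, eps_sq, one_mul]
  rw [hdiag, yv_solves _ h]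
  funext i
  simp [flipMap]

def Egood (n : ℕ) (s : Fin n → Bool) : Set (Fin n → Fin (n + 1) → ℝ) :=
  {ξ | (colA ξ).det ≠ 0 ∧ ∀ j, 0 < eps s j * yv ξ j}

lemma measurableSet_Egood (s : Fin n → Bool) : MeasurableSet (Egood n s) := by
  have h1 : Egood n s = {ξ | (colA ξ).det = 0}ᶜ ∩ ⋂ j, {ξ | 0 < eps s j * yv ξ j} := by
    ext ξ
    simp [Egood]
  rw [h1]
  exact ((measurable_detA (measurableSet_singleton 0)).compl).inter
    (MeasurableSet.iInter fun j =>
      measurableSet_lt measurable_const ((measurable_yv j).const_mul _))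

lemma flip_preimage_Egood (s : Fin n → Bool) :
    flipMap s ⁻¹' Egood n (fun _ => true) = Egood n s := by
  ext ξ
  simp only [Set.mem_preimage, Egood, Set.mem_setOf_eq]
  constructor
  · rintro ⟨hd, hy⟩
    have hdet : (colA ξ).det ≠ 0 := by
      intro h0
      rw [det_colA_flip, h0, zero_mul] at hd
      exact hd rfl
    refine ⟨hdet, fun j => ?_⟩
    have := hy j
    rw [yv_flip s ξ hdet] at this
    simpa [eps] using this
  · rintro ⟨hd, hy⟩
    have hdet' : (colA (flipMap s ξ)).det ≠ 0 := by
      rw [det_colA_flip]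
      exact mul_ne_zero hd (Finset.prod_ne_zero_iff.mpr fun j _ => eps_ne_zero s j)
    refine ⟨hdet', fun j => ?_⟩
    rw [yv_flip s ξ hd]
    simpa [eps] using hy j

lemma Egood_pairwise_disjoint :
    Pairwise (Function.onFun Disjoint fun s : Fin n → Bool => Egood n s) := by
  intro s t hst
  obtain ⟨j, hj⟩ : ∃ j, s j ≠ t j := by
    by_contra h
    push_neg at h
    exact hst (funext h)
  refine Set.disjoint_left.mpr fun ξ hs ht => ?_
  have h1 := hs.2 j
  have h2 := ht.2 j
  rcases Bool.eq_false_or_eq_true (s j) with hsj | hsj <;>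
    rcases Bool.eq_false_or_eq_true (t j) with htj | htj <;>
      simp [hsj, htj] at hj h1 h2 <;> unfold eps at h1 h2 <;>
        rw [hsj] at h1 <;> rw [htj] at h2 <;> simp at h1 h2 <;> linarith

lemma Egood_measure_le (n : ℕ) :
    NU n (Egood n fun _ => true) ≤ ((2 : ℝ≥0∞) ^ n)⁻¹ := by
  classical
  have hall : ∀ s : Fin n → Bool, NU n (Egood n s) = NU n (Egood n fun _ => true) := by
    intro s
    rw [← flip_preimage_Egood s]
    exact (flip_measurePreserving s).measure_preimage
      (measurableSet_Egood _).nullMeasurableSet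
  have hsum : ∑ s : Fin n → Bool, NU n (Egood n s) ≤ 1 := by
    rw [← tsum_fintype (L := SummationFilter.unconditional _)]
    rw [← measure_iUnion Egood_pairwise_disjoint fun s => measurableSet_Egood s]
    exact prob_le_one
  rw [Finset.sum_congr rfl fun s _ => hall s, Finset.sum_const, Finset.card_univ,
    Fintype.card_fun] at hsum
  simp only [Fintype.card_bool, Fintype.card_fin, nsmul_eq_mul] at hsum
  have h2n : ((2 : ℝ≥0∞) ^ n) ≠ 0 := by positivity
  have h2n' : ((2 : ℝ≥0∞) ^ n) ≠ ⊤ := by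
    exact ENNReal.pow_ne_top (by norm_num)
  calc NU n (Egood n fun _ => true)
      = ((2 : ℝ≥0∞) ^ n)⁻¹ * (((2 : ℝ≥0∞) ^ n) * NU n (Egood n fun _ => true)) := by
        rw [← mul_assoc, ENNReal.inv_mul_cancel h2n h2n', one_mul]
    _ ≤ ((2 : ℝ≥0∞) ^ n)⁻¹ * 1 := by
        refine mul_le_mul_right ?_ _
        calc ((2 : ℝ≥0∞) ^ n) * NU n (Egood n fun _ => true)
            = ((2 : ℕ) ^ n : ℕ) * NU n (Egood n fun _ => true) := by
              norm_num
          _ ≤ 1 := hsum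
    _ = ((2 : ℝ≥0∞) ^ n)⁻¹ := mul_one _
/-! ### Analytic infrastructure -/

def dotZ {k : ℕ} (a : Fin k → ℤ) (v : Fin k → ℝ) : ℝ := ∑ l, (a l : ℝ) * v l

lemma dotZ_sub {k : ℕ} (a : Fin k → ℤ) (u w : Fin k → ℝ) :
    dotZ a (u - w) = dotZ a u - dotZ a w := by
  unfold dotZ
  rw [← Finset.sum_sub_distrib]
  exact Finset.sum_congr rfl fun l _ => by simp [Pi.sub_apply]; ring

lemma dotZ_affine {k : ℕ} (a : Fin k → ℤ) (u v : Fin k → ℝ) (s : ℝ) :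
    dotZ a (fun l => u l + s * v l) = dotZ a u + s * dotZ a v := by
  unfold dotZ
  rw [Finset.mul_sum, ← Finset.sum_add_distrib]
  exact Finset.sum_congr rfl fun l _ => by ring

lemma zmon_pos {k : ℕ} (a : Fin k → ℤ) {x : Fin k → ℝ} (hx : ∀ l, 0 < x l) : 0 < zmon a x :=
  Finset.prod_pos fun l _ => zpow_pos (hx l) _

lemma zmon_ne_zero {k : ℕ} (a : Fin k → ℤ) {x : Fin k → ℝ} (hx : ∀ l, 0 < x l) :
    zmon a x ≠ 0 := ne_of_gt (zmon_pos a hx)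

lemma zmon_exp {k : ℕ} (a : Fin k → ℤ) (w : Fin k → ℝ) :
    zmon a (fun l => Real.exp (w l)) = Real.exp (dotZ a w) := by
  unfold dotZ
  rw [Real.exp_sum]
  unfold zmon
  refine Finset.prod_congr rfl fun l _ => ?_
  rw [← Real.rpow_intCast (Real.exp (w l)) (a l),
    Real.rpow_def_of_pos (Real.exp_pos _), Real.log_exp]
  congr 1
  ring

lemma log_zmon {k : ℕ} (a : Fin k → ℤ) {x : Fin k → ℝ} (hx : ∀ l, 0 < x l) :
    Real.log (zmon a x) = dotZ a (fun l => Real.log (x l)) := by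
  unfold zmon dotZ
  rw [Real.log_prod fun l _ => zpow_ne_zero _ (ne_of_gt (hx l))]
  exact Finset.sum_congr rfl fun l _ => Real.log_zpow _ _

noncomputable def Ldot {k : ℕ} (a : Fin k → ℤ) (x : Fin k → ℝ) : (Fin k → ℝ) →L[ℝ] ℝ :=
  ∑ l, ((a l : ℝ) / x l) • (ContinuousLinearMap.proj l : (Fin k → ℝ) →L[ℝ] ℝ)

lemma Ldot_apply {k : ℕ} (a : Fin k → ℤ) (x w : Fin k → ℝ) :
    Ldot a x w = ∑ l, (a l : ℝ) / x l * w l := by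
  simp [Ldot]

lemma Ldot_apply_mul {k : ℕ} (a : Fin k → ℤ) {x : Fin k → ℝ} (hx : ∀ l, 0 < x l)
    (v : Fin k → ℝ) : Ldot a x (fun l => x l * v l) = dotZ a v := by
  rw [Ldot_apply]
  unfold dotZ
  refine Finset.sum_congr rfl fun l _ => ?_
  rw [div_mul_eq_mul_div, mul_comm (x l) (v l), ← mul_assoc, mul_div_assoc,
    div_self (ne_of_gt (hx l)), mul_one]

lemma hasFDerivAt_zmon {k : ℕ} (a : Fin k → ℤ) {x : Fin k → ℝ} (hx : ∀ l, 0 < x l) :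
    HasFDerivAt (zmon a) (zmon a x • Ldot a x) x := by
  have hopen : IsOpen {y : Fin k → ℝ | ∀ l, 0 < y l} := by
    rw [show {y : Fin k → ℝ | ∀ l, 0 < y l} = Set.univ.pi fun _ => Set.Ioi (0:ℝ) by
      ext y; simp [Set.mem_pi]]
    exact isOpen_set_pi Set.finite_univ fun l _ => isOpen_Ioi
  have heq : (fun y : Fin k → ℝ => Real.exp (∑ l, (a l : ℝ) * Real.log (y l)))
      =ᶠ[nhds x] zmon a := by
    filter_upwards [hopen.mem_nhds hx] with y hy
    have h1 : zmon a y = zmon a fun l => Real.exp (Real.log (y l)) := by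
      congr 1
      funext l
      rw [Real.exp_log (hy l)]
    rw [h1, zmon_exp]
    rfl
  have hsum : HasFDerivAt (fun y : Fin k → ℝ => ∑ l, (a l : ℝ) * Real.log (y l))
      (Ldot a x) x := by
    unfold Ldot
    refine HasFDerivAt.fun_sum fun l _ => ?_
    have h1 : HasFDerivAt (fun y : Fin k → ℝ => y l)
        (ContinuousLinearMap.proj l : (Fin k → ℝ) →L[ℝ] ℝ) x :=
      (ContinuousLinearMap.proj l : (Fin k → ℝ) →L[ℝ] ℝ).hasFDerivAt
    have h2 := (Real.hasDerivAt_log (ne_of_gt (hx l))).comp_hasFDerivAt x h1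
    have h3 := h2.const_mul ((a l : ℝ))
    exact h3.congr_fderiv (by rw [smul_smul, div_eq_mul_inv])
  have hexp := (Real.hasDerivAt_exp (∑ l, (a l : ℝ) * Real.log (x l))).comp_hasFDerivAt x hsum
  have hfinal := hexp.congr_of_eventuallyEq heq.symm
  have hval : Real.exp (∑ l, (a l : ℝ) * Real.log (x l)) = zmon a x := by
    have h1 : zmon a x = zmon a fun l => Real.exp (Real.log (x l)) := by
      congr 1
      funext l
      rw [Real.exp_log (hx l)]
    rw [h1, zmon_exp]
    rfl
  rwa [hval] at hfinal
/-! ### Derivative of `Fsys` -/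

section FsysDeriv

variable {n m : ℕ} (β : Fin m → Fin n → ℤ) (c : Fin m → ℝ) (α : Fin n → Fin n → ℤ)
  (σ : Fin n → ℝ) (ξ : Fin n → Fin (n + 1) → ℝ)

/-- The radicand `∑ c_j² x^{2β_j}`. -/
noncomputable def Sq (x : Fin n → ℝ) : ℝ := ∑ j, c j ^ 2 * zmon (fun k => 2 * β j k) x

lemma Fsys_eq (i : Fin n) (x : Fin n → ℝ) :
    Fsys β c α σ ξ i x = ξ i 0 * Real.sqrt (Sq β c x)
      + ∑ j : Fin n, ξ i j.succ * σ j * zmon (α j) x := rfl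

lemma Sq_pos (hm : 0 < m) (hc : ∀ j, c j ≠ 0) {x : Fin n → ℝ} (hx : ∀ l, 0 < x l) :
    0 < Sq β c x := by
  haveI : Nonempty (Fin m) := Fin.pos_iff_nonempty.mp hm
  refine Finset.sum_pos (fun j _ => mul_pos ?_ (zmon_pos _ hx)) Finset.univ_nonempty
  rw [sq]
  exact mul_self_pos.mpr (hc j)

noncomputable def DSq (x : Fin n → ℝ) : (Fin n → ℝ) →L[ℝ] ℝ :=
  ∑ j, (c j ^ 2) • (zmon (fun k => 2 * β j k) x • Ldot (fun k => 2 * β j k) x)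

lemma hasFDerivAt_Sq {x : Fin n → ℝ} (hx : ∀ l, 0 < x l) :
    HasFDerivAt (Sq β c) (DSq β c x) x := by
  unfold Sq DSq
  exact HasFDerivAt.fun_sum fun j _ => (hasFDerivAt_zmon _ hx).const_mul (c j ^ 2)

noncomputable def DF (i : Fin n) (x : Fin n → ℝ) : (Fin n → ℝ) →L[ℝ] ℝ :=
  (ξ i 0 * (1 / (2 * Real.sqrt (Sq β c x)))) • DSq β c x
    + ∑ j, (ξ i j.succ * σ j) • (zmon (α j) x • Ldot (α j) x)

lemma hasFDerivAt_Fsys {x : Fin n → ℝ} (hx : ∀ l, 0 < x l) (hSq : 0 < Sq β c x) (i : Fin n) :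
    HasFDerivAt (fun y => Fsys β c α σ ξ i y) (DF β c α σ ξ i x) x := by
  have h1 : HasFDerivAt (fun y => Real.sqrt (Sq β c y))
      ((1 / (2 * Real.sqrt (Sq β c x))) • DSq β c x) x :=
    (Real.hasDerivAt_sqrt (ne_of_gt hSq)).comp_hasFDerivAt x (hasFDerivAt_Sq β c hx)
  have h2 := h1.const_mul (ξ i 0)
  have h3 : HasFDerivAt (fun y => ∑ j : Fin n, ξ i j.succ * σ j * zmon (α j) y)
      (∑ j, (ξ i j.succ * σ j) • (zmon (α j) x • Ldot (α j) x)) x :=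
    HasFDerivAt.fun_sum fun j _ => (hasFDerivAt_zmon _ hx).const_mul (ξ i j.succ * σ j)
  have h4 := h2.fun_add h3
  have hfun : (fun y => ξ i 0 * Real.sqrt (Sq β c y)
      + ∑ j : Fin n, ξ i j.succ * σ j * zmon (α j) y)
      = fun y => Fsys β c α σ ξ i y := by
    funext y
    rw [Fsys_eq]
  rw [hfun] at h4
  have : (ξ i 0) • ((1 / (2 * Real.sqrt (Sq β c x))) • DSq β c x)
      = (ξ i 0 * (1 / (2 * Real.sqrt (Sq β c x)))) • DSq β c x := smul_smul _ _ _
  rw [this] at h4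
  exact h4

/-- The "relative logarithmic derivative of `f` in multiplicative direction `v`". -/
noncomputable def Qq (x v : Fin n → ℝ) : ℝ :=
  (∑ j, c j ^ 2 * zmon (fun k => 2 * β j k) x * dotZ (fun k => 2 * β j k) v)
    / (2 * Sq β c x)

lemma DF_apply_mul {x : Fin n → ℝ} (hx : ∀ l, 0 < x l) (hSq : 0 < Sq β c x)
    (i : Fin n) (v : Fin n → ℝ) :
    DF β c α σ ξ i x (fun l => x l * v l)
      = ξ i 0 * (Real.sqrt (Sq β c x) * Qq β c x v)
        + ∑ j, ξ i j.succ * ((σ j * zmon (α j) x) * dotZ (α j) v) := by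
  have hsqrt : Real.sqrt (Sq β c x) ^ 2 = Sq β c x := Real.sq_sqrt (le_of_lt hSq)
  have hsqrtpos : 0 < Real.sqrt (Sq β c x) := Real.sqrt_pos.mpr hSq
  unfold DF
  rw [ContinuousLinearMap.add_apply, ContinuousLinearMap.smul_apply]
  have hDSq : DSq β c x (fun l => x l * v l)
      = ∑ j, c j ^ 2 * zmon (fun k => 2 * β j k) x * dotZ (fun k => 2 * β j k) v := by
    unfold DSq
    rw [ContinuousLinearMap.sum_apply]
    refine Finset.sum_congr rfl fun j _ => ?_
    rw [ContinuousLinearMap.smul_apply, ContinuousLinearMap.smul_apply,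
      Ldot_apply_mul _ hx]
    simp only [smul_eq_mul]
    ring
  have hsum : (∑ j, (ξ i j.succ * σ j) • (zmon (α j) x • Ldot (α j) x))
        (fun l => x l * v l)
      = ∑ j, ξ i j.succ * ((σ j * zmon (α j) x) * dotZ (α j) v) := by
    rw [ContinuousLinearMap.sum_apply]
    refine Finset.sum_congr rfl fun j _ => ?_
    rw [ContinuousLinearMap.smul_apply, ContinuousLinearMap.smul_apply,
      Ldot_apply_mul _ hx]
    simp [smul_eq_mul]
    ring
  rw [hDSq, hsum]
  congr 1
  rw [smul_eq_mul]
  unfold Qq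
  have h2 : Sq β c x = Real.sqrt (Sq β c x) * Real.sqrt (Sq β c x) := by
    rw [← sq, hsqrt]
  have key : (1 / (2 * Real.sqrt (Sq β c x))) *
      (∑ j, c j ^ 2 * zmon (fun k => 2 * β j k) x * dotZ (fun k => 2 * β j k) v)
      = Real.sqrt (Sq β c x) *
        ((∑ j, c j ^ 2 * zmon (fun k => 2 * β j k) x * dotZ (fun k => 2 * β j k) v)
          / (2 * Sq β c x)) := by
    set a := Real.sqrt (Sq β c x) with ha
    have hane : a ≠ 0 := ne_of_gt hsqrtpos
    rw [h2, one_div_mul_eq_div, mul_div_assoc', show 2 * (a * a) = a * (2 * a) by ring,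
      mul_div_mul_left _ _ hane]
  rw [mul_assoc, key]
lemma jacM_mulVec {x : Fin n → ℝ} (hx : ∀ l, 0 < x l) (hSq : 0 < Sq β c x) (w : Fin n → ℝ) :
    (Matrix.of fun i j : Fin n =>
        fderiv ℝ (fun y => Fsys β c α σ ξ i y) x (Pi.single j 1)) *ᵥ w
      = fun i => DF β c α σ ξ i x w := by
  funext i
  simp only [Matrix.mulVec, dotProduct, Matrix.of_apply]
  have step1 : ∑ j, fderiv ℝ (fun y => Fsys β c α σ ξ i y) x (Pi.single j 1) * w j
      = ∑ j, DF β c α σ ξ i x (Pi.single j (w j)) := by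
    refine Finset.sum_congr rfl fun j _ => ?_
    rw [(hasFDerivAt_Fsys β c α σ ξ hx hSq i).fderiv]
    have hsingle : (Pi.single j (w j) : Fin n → ℝ) = w j • (Pi.single j 1 : Fin n → ℝ) := by
      funext l
      by_cases h : l = j <;> simp [Pi.single_apply, h]
    rw [hsingle, _root_.map_smul, smul_eq_mul, mul_comm]
  rw [step1, ← map_sum, Finset.univ_sum_single]

lemma sol_mulVec {x : Fin n → ℝ} (hsol : ∀ i, Fsys β c α σ ξ i x = 0) :
    colA ξ *ᵥ (fun j => σ j * zmon (α j) x)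
      = fun i => -(ξ i 0 * Real.sqrt (Sq β c x)) := by
  funext i
  have h := hsol i
  rw [Fsys_eq] at h
  have h2 : (colA ξ *ᵥ fun j => σ j * zmon (α j) x) i
      = ∑ j, ξ i j.succ * σ j * zmon (α j) x := by
    simp only [Matrix.mulVec, dotProduct, colA, Matrix.of_apply]
    exact Finset.sum_congr rfl fun j _ => by ring
  rw [h2]
  linarith

lemma sol_y_pos (hn : 0 < n) (hdet : (colA ξ).det ≠ 0) (hσ : ∀ j, 0 < σ j)
    {x : Fin n → ℝ} (hx : ∀ l, 0 < x l) (hsol : ∀ i, Fsys β c α σ ξ i x = 0) :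
    (∀ j, 0 < yv ξ j) ∧ 0 < Real.sqrt (Sq β c x) ∧
      (fun j => σ j * zmon (α j) x)
        = fun j => Real.sqrt (Sq β c x) * yv ξ j := by
  have hg : ∀ j, 0 < σ j * zmon (α j) x := fun j => mul_pos (hσ j) (zmon_pos _ hx)
  have hAg := sol_mulVec β c α σ ξ hsol
  have hfne : Real.sqrt (Sq β c x) ≠ 0 := by
    intro h0
    have hz : colA ξ *ᵥ (fun j => σ j * zmon (α j) x) = 0 := by
      rw [hAg]
      funext i
      rw [h0]
      simp
    have hg0 := Matrix.eq_zero_of_mulVec_eq_zero hdet hz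
    have h1 := hg ⟨0, hn⟩
    rw [congrFun hg0 ⟨0, hn⟩] at h1
    exact lt_irrefl 0 h1
  have hfpos : 0 < Real.sqrt (Sq β c x) :=
    lt_of_le_of_ne (Real.sqrt_nonneg _) (Ne.symm hfne)
  have hgy : (fun j => σ j * zmon (α j) x)
      = fun j => Real.sqrt (Sq β c x) * yv ξ j := by
    apply mulVec_cancel hdet
    rw [hAg]
    rw [show (fun j => Real.sqrt (Sq β c x) * yv ξ j) = Real.sqrt (Sq β c x) • yv ξ from rfl,
      Matrix.mulVec_smul, yv_solves ξ hdet]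
    funext i
    simp only [Pi.smul_apply, smul_eq_mul]
    ring
  refine ⟨fun j => ?_, hfpos, hgy⟩
  have h1 := hg j
  rw [congrFun hgy j] at h1
  rcases mul_pos_iff.mp h1 with ⟨_, hy⟩ | ⟨hf', _⟩
  · exact hy
  · linarith

lemma m_pos_of_Sq_pos {x : Fin n → ℝ} (hSqx : 0 < Sq β c x) : 0 < m := by
  rcases Nat.eq_zero_or_pos m with rfl | h
  · exfalso
    unfold Sq at hSqx
    simp at hSqx
  · exact h

lemma mulVec_solution (hn : 0 < n) (hdet : (colA ξ).det ≠ 0) (hσ : ∀ j, 0 < σ j)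
    {x : Fin n → ℝ} (hx : ∀ l, 0 < x l) (hsol : ∀ i, Fsys β c α σ ξ i x = 0)
    (hSqx : 0 < Sq β c x) {v : Fin n → ℝ} {τ : ℝ} (hτ : ∀ j, dotZ (α j) v = τ) :
    (Matrix.of fun i j : Fin n =>
        fderiv ℝ (fun y => Fsys β c α σ ξ i y) x (Pi.single j 1)) *ᵥ (fun l => x l * v l)
      = fun i => ξ i 0 * (Real.sqrt (Sq β c x) * (Qq β c x v - τ)) := by
  rw [jacM_mulVec β c α σ ξ hx hSqx]
  funext i
  rw [DF_apply_mul β c α σ ξ hx hSqx i v]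
  have hsum : ∑ j, ξ i j.succ * ((σ j * zmon (α j) x) * dotZ (α j) v)
      = τ * (∑ j, ξ i j.succ * σ j * zmon (α j) x) := by
    rw [Finset.mul_sum]
    refine Finset.sum_congr rfl fun j _ => ?_
    rw [hτ j]
    ring
  have hA : (∑ j, ξ i j.succ * σ j * zmon (α j) x)
      = -(ξ i 0 * Real.sqrt (Sq β c x)) := by
    have h := congrFun (sol_mulVec β c α σ ξ hsol) i
    rw [← h]
    simp only [Matrix.mulVec, dotProduct, colA, Matrix.of_apply]
    exact Finset.sum_congr rfl fun j _ => by ring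
  rw [hsum, hA]
  ring
section LineConv

variable {mm : ℕ} (D P Λ : Fin mm → ℝ)

noncomputable def eSum (s : ℝ) : ℝ := ∑ j, D j * Real.exp (P j + s * Λ j)
noncomputable def eSum1 (s : ℝ) : ℝ := ∑ j, D j * Λ j * Real.exp (P j + s * Λ j)
noncomputable def eSum2 (s : ℝ) : ℝ := ∑ j, D j * Λ j ^ 2 * Real.exp (P j + s * Λ j)

lemma eSum_pos (hm : 0 < mm) (hD : ∀ j, 0 < D j) (s : ℝ) : 0 < eSum D P Λ s := by
  haveI : Nonempty (Fin mm) := Fin.pos_iff_nonempty.mp hm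
  exact Finset.sum_pos (fun j _ => mul_pos (hD j) (Real.exp_pos _)) Finset.univ_nonempty

lemma hasDerivAt_affine (p l s : ℝ) : HasDerivAt (fun s : ℝ => p + s * l) l s := by
  simpa using ((hasDerivAt_id s).mul_const l).const_add p

lemma hasDerivAt_eSum (s : ℝ) : HasDerivAt (eSum D P Λ) (eSum1 D P Λ s) s := by
  unfold eSum eSum1
  have h : ∀ j ∈ Finset.univ, HasDerivAt (fun s : ℝ => D j * Real.exp (P j + s * Λ j))
      (D j * (Real.exp (P j + s * Λ j) * Λ j)) s :=
    fun j _ => ((hasDerivAt_affine (P j) (Λ j) s).exp).const_mul (D j)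
  exact (HasDerivAt.fun_sum h).congr_deriv (Finset.sum_congr rfl fun j _ => by ring)

lemma hasDerivAt_eSum1 (s : ℝ) : HasDerivAt (eSum1 D P Λ) (eSum2 D P Λ s) s := by
  unfold eSum1 eSum2
  have h : ∀ j ∈ Finset.univ, HasDerivAt (fun s : ℝ => D j * Λ j * Real.exp (P j + s * Λ j))
      (D j * Λ j * (Real.exp (P j + s * Λ j) * Λ j)) s :=
    fun j _ => ((hasDerivAt_affine (P j) (Λ j) s).exp).const_mul (D j * Λ j)
  exact (HasDerivAt.fun_sum h).congr_deriv (Finset.sum_congr rfl fun j _ => by ring)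

lemma eSum_CS (hD : ∀ j, 0 < D j) (s : ℝ) :
    eSum1 D P Λ s * eSum1 D P Λ s ≤ eSum D P Λ s * eSum2 D P Λ s := by
  set f : Fin mm → ℝ := fun j => Real.sqrt (D j) * Real.exp ((P j + s * Λ j) / 2) with hf
  set g : Fin mm → ℝ := fun j => Λ j * f j with hg
  have hf2 : ∀ j, f j ^ 2 = D j * Real.exp (P j + s * Λ j) := by
    intro j
    rw [hf]
    rw [mul_pow, Real.sq_sqrt (le_of_lt (hD j)), ← Real.exp_nat_mul]
    ring_nf
  have key := Finset.sum_mul_sq_le_sq_mul_sq Finset.univ f g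
  have h1 : ∑ j, f j * g j = eSum1 D P Λ s := by
    unfold eSum1
    refine Finset.sum_congr rfl fun j _ => ?_
    have : f j * g j = Λ j * f j ^ 2 := by rw [hg]; ring
    rw [this, hf2 j]
    ring
  have h2 : ∑ j, f j ^ 2 = eSum D P Λ s := by
    unfold eSum
    exact Finset.sum_congr rfl fun j _ => hf2 j
  have h3 : ∑ j, g j ^ 2 = eSum2 D P Λ s := by
    unfold eSum2
    refine Finset.sum_congr rfl fun j _ => ?_
    have : g j ^ 2 = Λ j ^ 2 * f j ^ 2 := by rw [hg]; ring
    rw [this, hf2 j]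
    ring
  rw [h1, h2, h3] at key
  calc eSum1 D P Λ s * eSum1 D P Λ s = eSum1 D P Λ s ^ 2 := (sq _).symm
    _ ≤ eSum D P Λ s * eSum2 D P Λ s := key

noncomputable def Hfun (τ : ℝ) (s : ℝ) : ℝ := (1/2) * Real.log (eSum D P Λ s) - τ * s

lemma Hfun_hasDeriv (hm : 0 < mm) (hD : ∀ j, 0 < D j) (τ s : ℝ) :
    HasDerivAt (Hfun D P Λ τ) ((1/2) * (eSum1 D P Λ s / eSum D P Λ s) - τ) s := by
  have h1 := ((hasDerivAt_eSum D P Λ s).log (ne_of_gt (eSum_pos D P Λ hm hD s))).const_mul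
    ((1:ℝ)/2)
  have h2 : HasDerivAt (fun s : ℝ => τ * s) τ s := by
    simpa using (hasDerivAt_id s).const_mul τ
  exact h1.sub h2

lemma Hfun_deriv (hm : 0 < mm) (hD : ∀ j, 0 < D j) (τ : ℝ) :
    deriv (Hfun D P Λ τ) = fun s => (1/2) * (eSum1 D P Λ s / eSum D P Λ s) - τ :=
  funext fun s => (Hfun_hasDeriv D P Λ hm hD τ s).deriv

lemma Hfun_hasDeriv2 (hm : 0 < mm) (hD : ∀ j, 0 < D j) (τ s : ℝ) :
    HasDerivAt (deriv (Hfun D P Λ τ))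
      ((1/2) * ((eSum2 D P Λ s * eSum D P Λ s - eSum1 D P Λ s * eSum1 D P Λ s)
        / eSum D P Λ s ^ 2)) s := by
  rw [Hfun_deriv D P Λ hm hD τ]
  exact (((hasDerivAt_eSum1 D P Λ s).div (hasDerivAt_eSum D P Λ s)
    (ne_of_gt (eSum_pos D P Λ hm hD s))).const_mul ((1:ℝ)/2)).sub_const τ

lemma Hfun_convex (hm : 0 < mm) (hD : ∀ j, 0 < D j) (τ : ℝ) :
    ConvexOn ℝ Set.univ (Hfun D P Λ τ) := by
  refine convexOn_of_deriv2_nonneg convex_univ ?_ ?_ ?_ ?_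
  · have hdiff : Differentiable ℝ (Hfun D P Λ τ) :=
      fun s => (Hfun_hasDeriv D P Λ hm hD τ s).differentiableAt
    exact hdiff.continuous.continuousOn
  · exact fun s _ => (Hfun_hasDeriv D P Λ hm hD τ s).differentiableAt.differentiableWithinAt
  · exact fun s _ => (Hfun_hasDeriv2 D P Λ hm hD τ s).differentiableAt.differentiableWithinAt
  · intro s _
    have hit : deriv^[2] (Hfun D P Λ τ) s = deriv (deriv (Hfun D P Λ τ)) s := by
      simp [Function.iterate_succ_apply', Function.iterate_one]
    rw [hit, (Hfun_hasDeriv2 D P Λ hm hD τ s).deriv]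
    have hnum : 0 ≤ eSum2 D P Λ s * eSum D P Λ s - eSum1 D P Λ s * eSum1 D P Λ s := by
      have := eSum_CS D P Λ hD s
      linarith [this]
    positivity

lemma middle_deriv_zero (hm : 0 < mm) (hD : ∀ j, 0 < D j) (τ : ℝ)
    {s1 s2 s3 : ℝ} (h12 : s1 < s2) (h23 : s2 < s3)
    (hv1 : Hfun D P Λ τ s1 = Hfun D P Λ τ s2)
    (hv3 : Hfun D P Λ τ s3 = Hfun D P Λ τ s2) :
    (1/2) * (eSum1 D P Λ s2 / eSum D P Λ s2) = τ := by
  have hmax : IsLocalMax (Hfun D P Λ τ) s2 := by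
    have hseg : ∀ z ∈ Set.Ioo s1 s3, Hfun D P Λ τ z ≤ Hfun D P Λ τ s2 := by
      intro z hz
      have hz' : z ∈ segment ℝ s1 s3 := by
        rw [segment_eq_Icc (le_of_lt (h12.trans h23))]
        exact ⟨le_of_lt hz.1, le_of_lt hz.2⟩
      have h := (Hfun_convex D P Λ hm hD τ).le_on_segment (Set.mem_univ s1)
        (Set.mem_univ s3) hz'
      rwa [hv1, hv3, max_self] at h
    exact Filter.eventually_of_mem (Ioo_mem_nhds h12 h23) hseg
  have h0 := hmax.deriv_eq_zero
  rw [Hfun_deriv D P Λ hm hD τ] at h0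
  simp only at h0
  linarith

end LineConv
lemma no_three (hc : ∀ j, c j ≠ 0) (hσ : ∀ j, 0 < σ j) (hdet : (colA ξ).det ≠ 0)
    {x1 x2 x3 : Fin n → ℝ}
    (hx1 : ∀ l, 0 < x1 l) (hs1 : ∀ i, Fsys β c α σ ξ i x1 = 0)
    (hd1 : (Matrix.of fun i j : Fin n =>
      fderiv ℝ (fun y => Fsys β c α σ ξ i y) x1 (Pi.single j 1)).det ≠ 0)
    (hx2 : ∀ l, 0 < x2 l) (hs2 : ∀ i, Fsys β c α σ ξ i x2 = 0)
    (hd2 : (Matrix.of fun i j : Fin n =>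
      fderiv ℝ (fun y => Fsys β c α σ ξ i y) x2 (Pi.single j 1)).det ≠ 0)
    (hx3 : ∀ l, 0 < x3 l) (hs3 : ∀ i, Fsys β c α σ ξ i x3 = 0)
    (hd3 : (Matrix.of fun i j : Fin n =>
      fderiv ℝ (fun y => Fsys β c α σ ξ i y) x3 (Pi.single j 1)).det ≠ 0)
    (h12 : x1 ≠ x2) (h13 : x1 ≠ x3) (h23 : x2 ≠ x3) : False := by
  have hn : 0 < n := by
    rcases Nat.eq_zero_or_pos n with h0 | h
    · exact absurd (funext fun l : Fin n => absurd l.isLt (by omega) : x1 = x2) h12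
    · exact h
  obtain ⟨hy, hf1, hg1⟩ := sol_y_pos β c α σ ξ hn hdet hσ hx1 hs1
  obtain ⟨-, hf2, -⟩ := sol_y_pos β c α σ ξ hn hdet hσ hx2 hs2
  obtain ⟨-, hf3, -⟩ := sol_y_pos β c α σ ξ hn hdet hσ hx3 hs3
  have hSq1 : 0 < Sq β c x1 := Real.sqrt_pos.mp hf1
  have hSq2 : 0 < Sq β c x2 := Real.sqrt_pos.mp hf2
  have hSq3 : 0 < Sq β c x3 := Real.sqrt_pos.mp hf3
  have hm0 : 0 < m := m_pos_of_Sq_pos β c hSq1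
  -- logarithmic coordinates
  set u1 : Fin n → ℝ := fun l => Real.log (x1 l) with hu1
  set u2 : Fin n → ℝ := fun l => Real.log (x2 l) with hu2
  set u3 : Fin n → ℝ := fun l => Real.log (x3 l) with hu3
  have he1 : ∀ l, Real.exp (u1 l) = x1 l := by
    intro l; simp only [hu1]; exact Real.exp_log (hx1 l)
  have he2 : ∀ l, Real.exp (u2 l) = x2 l := by
    intro l; simp only [hu2]; exact Real.exp_log (hx2 l)
  have he3 : ∀ l, Real.exp (u3 l) = x3 l := by
    intro l; simp only [hu3]; exact Real.exp_log (hx3 l)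
  set v1 : Fin n → ℝ := u2 - u1 with hv1def
  set v2 : Fin n → ℝ := u3 - u1 with hv2def
  have hv1ne : v1 ≠ 0 := by
    intro h0
    apply h12
    funext l
    have h1 : u2 l - u1 l = 0 := by
      have := congrFun h0 l
      simpa [hv1def] using this
    rw [← he1 l, ← he2 l]
    congr 1
    linarith
  have hv2ne : v2 ≠ 0 := by
    intro h0
    apply h13
    funext l
    have h1 : u3 l - u1 l = 0 := by
      have := congrFun h0 l
      simpa [hv2def] using this
    rw [← he1 l, ← he3 l]
    congr 1
    linarith
  have hv12 : v1 ≠ v2 := by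
    intro h0
    apply h23
    funext l
    have h1 : u2 l - u1 l = u3 l - u1 l := by
      have := congrFun h0 l
      simpa [hv1def, hv2def] using this
    rw [← he2 l, ← he3 l]
    congr 1
    linarith
  -- the key logarithmic relation at any solution
  have hkey : ∀ (x : Fin n → ℝ), (∀ l, 0 < x l) → (∀ i, Fsys β c α σ ξ i x = 0) →
      ∀ j, dotZ (α j) (fun l => Real.log (x l))
        = Real.log (Real.sqrt (Sq β c x)) + Real.log (yv ξ j) - Real.log (σ j) := by
    intro x hx hsol j
    obtain ⟨hy', hf', hg'⟩ := sol_y_pos β c α σ ξ hn hdet hσ hx hsol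
    have h := congrFun hg' j
    have hlog := congrArg Real.log h
    rw [Real.log_mul (ne_of_gt (hσ j)) (zmon_ne_zero _ hx),
      Real.log_mul (ne_of_gt hf') (ne_of_gt (hy' j)), log_zmon _ hx] at hlog
    linarith
  set τ1 : ℝ := Real.log (Real.sqrt (Sq β c x2)) - Real.log (Real.sqrt (Sq β c x1)) with hτ1def
  set τ2 : ℝ := Real.log (Real.sqrt (Sq β c x3)) - Real.log (Real.sqrt (Sq β c x1)) with hτ2def
  have hτ1 : ∀ j, dotZ (α j) v1 = τ1 := by
    intro j
    have e1 := hkey x1 hx1 hs1 j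
    have e2 := hkey x2 hx2 hs2 j
    rw [hv1def, dotZ_sub, hτ1def]
    rw [← hu1, ← hu2] at *
    linarith [e1, e2]
  have hτ2 : ∀ j, dotZ (α j) v2 = τ2 := by
    intro j
    have e1 := hkey x1 hx1 hs1 j
    have e3 := hkey x3 hx3 hs3 j
    rw [hv2def, dotZ_sub, hτ2def]
    linarith [e1, e3]
  by_cases hcol : ∃ t : ℝ, v2 = t • v1
  · -- collinear case
    obtain ⟨t, ht⟩ := hcol
    have ht0 : t ≠ 0 := by
      intro h0
      rw [h0, zero_smul] at ht
      exact hv2ne ht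
    have ht1 : t ≠ 1 := by
      intro h1
      rw [h1, one_smul] at ht
      exact hv12 ht.symm
    set D : Fin m → ℝ := fun j => c j ^ 2 with hDdef
    have hD : ∀ j, 0 < D j := by
      intro j
      simp only [hDdef]
      have := hc j
      positivity
    set Pp : Fin m → ℝ := fun j => dotZ (fun k => 2 * β j k) u1 with hPdef
    set Λ : Fin m → ℝ := fun j => dotZ (fun k => 2 * β j k) v1 with hΛdef
    set X : ℝ → Fin n → ℝ := fun s l => Real.exp (u1 l + s * v1 l) with hXdef
    have hXpos : ∀ s, ∀ l : Fin n, 0 < X s l := by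
      intro s l
      simp only [hXdef]
      exact Real.exp_pos _
    have hX0 : X 0 = x1 := by
      funext l
      simp only [hXdef, zero_mul, add_zero]
      exact he1 l
    have hX1 : X 1 = x2 := by
      funext l
      simp only [hXdef, hv1def, Pi.sub_apply, one_mul]
      rw [show u1 l + (u2 l - u1 l) = u2 l by ring]
      exact he2 l
    have hXt : X t = x3 := by
      funext l
      have hvl : v2 l = t * v1 l := by
        have := congrFun ht l
        simpa using this
      simp only [hXdef]
      rw [← hvl]
      have h1 : v2 l = u3 l - u1 l := by simp [hv2def]
      rw [h1, show u1 l + (u3 l - u1 l) = u3 l by ring]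
      exact he3 l
    have hSqX : ∀ s, Sq β c (X s) = eSum D Pp Λ s := by
      intro s
      show (∑ j, c j ^ 2 * zmon (fun k => 2 * β j k) (X s)) = _
      unfold eSum
      refine Finset.sum_congr rfl fun j _ => ?_
      have hz : zmon (fun k => 2 * β j k) (X s)
          = Real.exp (dotZ (fun k => 2 * β j k) (fun l => u1 l + s * v1 l)) := by
        rw [hXdef]
        exact zmon_exp _ _
      rw [hz, dotZ_affine]
    set i0 : Fin n := ⟨0, hn⟩ with hi0
    have hHconst : ∀ s : ℝ, (∀ i, Fsys β c α σ ξ i (X s) = 0) →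
        Hfun D Pp Λ τ1 s = dotZ (α i0) u1 - Real.log (yv ξ i0) + Real.log (σ i0) := by
      intro s hsol
      have hk := hkey (X s) (hXpos s) hsol i0
      have hlogX : (fun l => Real.log (X s l)) = fun l => u1 l + s * v1 l := by
        funext l
        simp only [hXdef]
        exact Real.log_exp _
      rw [hlogX, dotZ_affine, hτ1 i0] at hk
      have hlf : Real.log (Real.sqrt (Sq β c (X s)))
          = (1/2) * Real.log (eSum D Pp Λ s) := by
        rw [Real.log_sqrt (le_of_lt (Sq_pos β c hm0 hc (hXpos s))), hSqX s]
        ring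
      rw [hlf] at hk
      show (1/2) * Real.log (eSum D Pp Λ s) - τ1 * s = _
      linarith
    have hmiddle : ∀ s1 s2 s3 : ℝ, s1 < s2 → s2 < s3 →
        (∀ i, Fsys β c α σ ξ i (X s1) = 0) →
        (∀ i, Fsys β c α σ ξ i (X s2) = 0) →
        (Matrix.of fun i j : Fin n =>
          fderiv ℝ (fun y => Fsys β c α σ ξ i y) (X s2) (Pi.single j 1)).det ≠ 0 →
        (∀ i, Fsys β c α σ ξ i (X s3) = 0) → False := by
      intro s1 s2 s3 hlt12 hlt23 hsol1 hsol2 hdm hsol3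
      have hQ := middle_deriv_zero D Pp Λ hm0 hD τ1 hlt12 hlt23
        (by rw [hHconst s1 hsol1, hHconst s2 hsol2])
        (by rw [hHconst s3 hsol3, hHconst s2 hsol2])
      have hSqm : 0 < Sq β c (X s2) := Sq_pos β c hm0 hc (hXpos s2)
      have hesum_pos : 0 < eSum D Pp Λ s2 := eSum_pos D Pp Λ hm0 hD s2
      have hQq : Qq β c (X s2) v1 = τ1 := by
        show (∑ j, c j ^ 2 * zmon (fun k => 2 * β j k) (X s2) * dotZ (fun k => 2 * β j k) v1)
            / (2 * Sq β c (X s2)) = τ1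
        have hnum : (∑ j, c j ^ 2 * zmon (fun k => 2 * β j k) (X s2)
            * dotZ (fun k => 2 * β j k) v1) = eSum1 D Pp Λ s2 := by
          unfold eSum1
          refine Finset.sum_congr rfl fun j _ => ?_
          have hz : zmon (fun k => 2 * β j k) (X s2)
              = Real.exp (dotZ (fun k => 2 * β j k) (fun l => u1 l + s2 * v1 l)) := by
            rw [hXdef]
            exact zmon_exp _ _
          rw [hz, dotZ_affine]
          simp only [hDdef, hPdef, hΛdef]
          ring
        rw [hnum, hSqX s2]
        rw [div_eq_iff (by positivity)]
        field_simp at hQ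
        linarith
      have hMv := mulVec_solution β c α σ ξ hn hdet hσ (hXpos s2) hsol2 hSqm hτ1
      rw [hQq] at hMv
      have hMz : (Matrix.of fun i j : Fin n =>
          fderiv ℝ (fun y => Fsys β c α σ ξ i y) (X s2) (Pi.single j 1)) *ᵥ
            (fun l => X s2 l * v1 l) = 0 := by
        rw [hMv]
        funext i
        simp
      have hw := Matrix.eq_zero_of_mulVec_eq_zero hdm hMz
      obtain ⟨l, hl⟩ := Function.ne_iff.mp hv1ne
      have hzl : X s2 l * v1 l = 0 := congrFun hw l
      exact (mul_ne_zero (ne_of_gt (hXpos s2 l)) (by simpa using hl)) hzl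
    rcases lt_trichotomy t 0 with h | h | h
    · exact hmiddle t 0 1 h one_pos (by rw [hXt]; exact hs3) (by rw [hX0]; exact hs1)
        (by rw [hX0]; exact hd1) (by rw [hX1]; exact hs2)
    · exact absurd h ht0
    · rcases lt_trichotomy t 1 with h1 | h1 | h1
      · exact hmiddle 0 t 1 h h1 (by rw [hX0]; exact hs1) (by rw [hXt]; exact hs3)
          (by rw [hXt]; exact hd3) (by rw [hX1]; exact hs2)
      · exact absurd h1 ht1
      · exact hmiddle 0 1 t one_pos h1 (by rw [hX0]; exact hs1) (by rw [hX1]; exact hs2)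
          (by rw [hX1]; exact hd2) (by rw [hXt]; exact hs3)
  · -- non-collinear case
    set κ1 : ℝ := Real.sqrt (Sq β c x1) * (Qq β c x1 v1 - τ1) with hκ1
    set κ2 : ℝ := Real.sqrt (Sq β c x1) * (Qq β c x1 v2 - τ2) with hκ2
    have hM1 := mulVec_solution β c α σ ξ hn hdet hσ hx1 hs1 hSq1 hτ1
    have hM2 := mulVec_solution β c α σ ξ hn hdet hσ hx1 hs1 hSq1 hτ2
    rw [← hκ1] at hM1
    rw [← hκ2] at hM2
    by_cases hκz : κ1 = 0 ∧ κ2 = 0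
    · have hMz : (Matrix.of fun i j : Fin n =>
          fderiv ℝ (fun y => Fsys β c α σ ξ i y) x1 (Pi.single j 1)) *ᵥ
            (fun l => x1 l * v1 l) = 0 := by
        rw [hM1, hκz.1]
        funext i
        simp
      have hw := Matrix.eq_zero_of_mulVec_eq_zero hd1 hMz
      obtain ⟨l, hl⟩ := Function.ne_iff.mp hv1ne
      exact (mul_ne_zero (ne_of_gt (hx1 l)) (by simpa using hl)) (congrFun hw l)
    · set z : Fin n → ℝ := fun l => x1 l * (κ2 * v1 l - κ1 * v2 l) with hzdef
      have hzsplit : z = κ2 • (fun l => x1 l * v1 l) - κ1 • (fun l => x1 l * v2 l) := by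
        funext l
        simp only [hzdef, Pi.smul_apply, smul_eq_mul, Pi.sub_apply]
        ring
      have hMz : (Matrix.of fun i j : Fin n =>
          fderiv ℝ (fun y => Fsys β c α σ ξ i y) x1 (Pi.single j 1)) *ᵥ z = 0 := by
        rw [hzsplit, Matrix.mulVec_sub, Matrix.mulVec_smul, Matrix.mulVec_smul, hM1, hM2]
        funext i
        simp only [Pi.smul_apply, smul_eq_mul, Pi.sub_apply, Pi.zero_apply]
        ring
      have hw := Matrix.eq_zero_of_mulVec_eq_zero hd1 hMz
      have hq : ∀ l, κ2 * v1 l - κ1 * v2 l = 0 := by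
        intro l
        have hzl := congrFun hw l
        simp only [hzdef, Pi.zero_apply] at hzl
        rcases mul_eq_zero.mp hzl with h | h
        · exact absurd h (ne_of_gt (hx1 l))
        · exact h
      by_cases hκ1z : κ1 = 0
      · have hκ2z : κ2 ≠ 0 := fun h => hκz ⟨hκ1z, h⟩
        apply hv1ne
        funext l
        have h1 := hq l
        rw [hκ1z] at h1
        simp only [zero_mul, sub_zero] at h1
        rcases mul_eq_zero.mp h1 with h | h
        · exact absurd h hκ2z
        · simpa using h
      · exact hcol ⟨κ2 / κ1, by
          funext l
          have h1 := hq l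
          simp only [Pi.smul_apply, smul_eq_mul]
          field_simp
          linarith⟩
lemma count_empty (hσ : ∀ j, 0 < σ j) (hdet : (colA ξ).det ≠ 0)
    (hybad : ¬ ∀ j, 0 < yv ξ j) :
    {x : Fin n → ℝ | (∀ i, 0 < x i) ∧ (∀ i, Fsys β c α σ ξ i x = 0) ∧
      (Matrix.of fun i j : Fin n =>
        fderiv ℝ (fun y => Fsys β c α σ ξ i y) x (Pi.single j 1)).det ≠ 0} = ∅ := by
  rw [Set.eq_empty_iff_forall_notMem]
  rintro x ⟨hx, hsol, -⟩
  push_neg at hybad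
  obtain ⟨j, hj⟩ := hybad
  have hn : 0 < n := lt_of_le_of_lt (Nat.zero_le _) j.isLt
  obtain ⟨hy', -, -⟩ := sol_y_pos β c α σ ξ hn hdet hσ hx hsol
  exact absurd (hy' j) (not_lt.mpr hj)

end FsysDeriv

lemma encard_le_two_of_no_three {X : Type*} {S : Set X}
    (h : ∀ a ∈ S, ∀ b ∈ S, ∀ d ∈ S, a ≠ b → a ≠ d → b ≠ d → False) : S.encard ≤ 2 := by
  rcases S.eq_empty_or_nonempty with rfl | ⟨a, ha⟩
  · simp
  rcases Set.eq_empty_or_nonempty (S \ {a}) with hE | ⟨b, hb⟩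
  · have hsub : S ⊆ {a} := by
      intro z hz
      by_contra hza
      exact Set.eq_empty_iff_forall_notMem.mp hE z ⟨hz, hza⟩
    calc S.encard ≤ ({a} : Set X).encard := Set.encard_mono hsub
      _ ≤ 2 := by simp
  · have hab : b ≠ a := by
      intro h'
      exact hb.2 (by simp [h'])
    have hsub : S ⊆ {a, b} := by
      intro z hz
      by_contra hzab
      simp only [Set.mem_insert_iff, Set.mem_singleton_iff, not_or] at hzab
      exact h a ha b hb.1 z hz (Ne.symm hab) (Ne.symm hzab.1) (Ne.symm hzab.2)
    calc S.encard ≤ ({a, b} : Set X).encard := Set.encard_mono hsub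
      _ = 2 := Set.encard_pair (Ne.symm hab)

section Count

variable {n m : ℕ} (β : Fin m → Fin n → ℤ) (c : Fin m → ℝ) (α : Fin n → Fin n → ℤ)
  (σ : Fin n → ℝ) (ξ : Fin n → Fin (n + 1) → ℝ)

lemma count_le_two (hc : ∀ j, c j ≠ 0) (hσ : ∀ j, 0 < σ j) (hdet : (colA ξ).det ≠ 0) :
    {x : Fin n → ℝ | (∀ i, 0 < x i) ∧ (∀ i, Fsys β c α σ ξ i x = 0) ∧
      (Matrix.of fun i j : Fin n =>
        fderiv ℝ (fun y => Fsys β c α σ ξ i y) x (Pi.single j 1)).det ≠ 0}.encard ≤ 2 :=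
  encard_le_two_of_no_three fun a ha b hb d hd hab had hbd =>
    no_three β c α σ ξ hc hσ hdet ha.1 ha.2.1 ha.2.2 hb.1 hb.2.1 hb.2.2
      hd.1 hd.2.1 hd.2.2 hab had hbd

end Count

end ESLaux

end

open ESLaux in
/-- **Lemma (expected number of solutions of the special random system).** With
`f(x) = (∑_j c_j² x^{2β_j})^{1/2}` (`c_j ≠ 0`), exponents `α₁, …, αₙ ∈ ℤⁿ`, `σ_j > 0` and
i.i.d. standard Gaussians `ξ_{i,j}`, the expected number of nondegenerate solutions in
`ℝ_{>0}ⁿ` of the system `ξ_{i,0} f(x) + ∑_j ξ_{i,j} σ_j x^{α_j} = 0` is at most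
`2·2^{-n} = 2^{1-n}`. -/
theorem expected_solutions_special_le (n m : ℕ)
    (β : Fin m → Fin n → ℤ) (c : Fin m → ℝ) (hc : ∀ j, c j ≠ 0)
    (α : Fin n → Fin n → ℤ) (σ : Fin n → ℝ) (hσ : ∀ j, 0 < σ j) :
    (∫⁻ ξ : Fin n → Fin (n + 1) → ℝ,
        (Set.encard {x : Fin n → ℝ | (∀ i, 0 < x i) ∧
            (∀ i, Fsys β c α σ ξ i x = 0) ∧
            (Matrix.of fun i j : Fin n =>
                fderiv ℝ (fun y => Fsys β c α σ ξ i y) x (Pi.single j 1)).det ≠ 0} : ℝ≥0∞)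
      ∂(Measure.pi fun _ : Fin n => Measure.pi fun _ : Fin (n + 1) => gaussianReal 0 1))
    ≤ 2 / 2 ^ n := by
  classical
  have hbound : ∀ᵐ ξ ∂(NU n),
      (Set.encard {x : Fin n → ℝ | (∀ i, 0 < x i) ∧
          (∀ i, Fsys β c α σ ξ i x = 0) ∧
          (Matrix.of fun i j : Fin n =>
              fderiv ℝ (fun y => Fsys β c α σ ξ i y) x (Pi.single j 1)).det ≠ 0} : ℝ≥0∞)
        ≤ (Egood n fun _ => true).indicator (fun _ => (2 : ℝ≥0∞)) ξ := by
    filter_upwards [compl_mem_ae_iff.mpr (det_colA_null n)] with ξ hξ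
    have hdet : (colA ξ).det ≠ 0 := hξ
    by_cases hy : ∀ j, 0 < yv ξ j
    · have hin : ξ ∈ Egood n (fun _ => true) :=
        ⟨hdet, fun j => by simpa [eps] using hy j⟩
      rw [Set.indicator_of_mem hin]
      have h2 := count_le_two β c α σ ξ hc hσ hdet
      exact_mod_cast h2
    · rw [count_empty β c α σ ξ hσ hdet hy]
      simp
  calc (∫⁻ ξ : Fin n → Fin (n + 1) → ℝ,
        (Set.encard {x : Fin n → ℝ | (∀ i, 0 < x i) ∧
            (∀ i, Fsys β c α σ ξ i x = 0) ∧
            (Matrix.of fun i j : Fin n =>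
                fderiv ℝ (fun y => Fsys β c α σ ξ i y) x (Pi.single j 1)).det ≠ 0} : ℝ≥0∞)
      ∂(Measure.pi fun _ : Fin n => Measure.pi fun _ : Fin (n + 1) => gaussianReal 0 1))
      ≤ ∫⁻ ξ, (Egood n fun _ => true).indicator (fun _ => (2 : ℝ≥0∞)) ξ ∂(NU n) :=
        lintegral_mono_ae hbound
    _ = 2 * NU n (Egood n fun _ => true) :=
        lintegral_indicator_const (measurableSet_Egood _) 2
    _ ≤ 2 * ((2 : ℝ≥0∞) ^ n)⁻¹ := mul_le_mul_right (Egood_measure_le n) 2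
    _ = 2 / 2 ^ n := by rw [div_eq_mul_inv]
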